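/- Let G be a finite graph that is K_3-free, (K_1+2K_2)-free, and C_6-free (as induced subgraphs), and let I be a maximal independent set of G. Then every induced copy of 2K_2 in G contains at least one vertex of I. -/

import Mathlib

/-- The 6-cycle `C₆`. -/
def C6 : SimpleGraph (ZMod 6) :=
  SimpleGraph.fromRel (fun i j => j = i + 1)

/-- The graph `K₁ + 2K₂`: vertex 0 is isolated, with edges 1-2 and 3-4. -/
def K1plus2K2 : SimpleGraph (Fin 5) :=
  SimpleGraph.fromRel (fun i j => (i = 1 ∧ j = 2) ∨ (i = 3 ∧ j = 4))

/-- `I` is an independent set of vertices of `G`. -/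
def IsIndep {V : Type*} (G : SimpleGraph V) (I : Set V) : Prop :=
  ∀ x ∈ I, ∀ y ∈ I, ¬ G.Adj x y

instance : DecidableRel C6.Adj := fun a b =>
  decidable_of_iff' _ (SimpleGraph.fromRel_adj (fun i j => j = i + 1) a b)

instance (a b : Fin 6) : Decidable (C6.Adj a b) :=
  inferInstanceAs (Decidable (C6.Adj (show ZMod 6 from a) (show ZMod 6 from b)))

lemma noK1p {V : Type*} (G : SimpleGraph V)
    (hK1plus2K2 : ¬ Nonempty (K1plus2K2 ↪g G))
    (z a b u v : V)
    (hza : z ≠ a) (hzb : z ≠ b) (hzu : z ≠ u) (hzv : z ≠ v)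
    (hab' : a ≠ b) (hau : a ≠ u) (hav : a ≠ v) (hbu : b ≠ u) (hbv : b ≠ v) (huv' : u ≠ v)
    (hab : G.Adj a b) (huv : G.Adj u v)
    (nza : ¬ G.Adj z a) (nzb : ¬ G.Adj z b) (nzu : ¬ G.Adj z u) (nzv : ¬ G.Adj z v)
    (nau : ¬ G.Adj a u) (nav : ¬ G.Adj a v) (nbu : ¬ G.Adj b u) (nbv : ¬ G.Adj b v) :
    False := by
  apply hK1plus2K2
  have hba := hab.symm
  have hvu := huv.symm
  have nza' : ¬ G.Adj a z := fun h => nza h.symm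
  have nzb' : ¬ G.Adj b z := fun h => nzb h.symm
  have nzu' : ¬ G.Adj u z := fun h => nzu h.symm
  have nzv' : ¬ G.Adj v z := fun h => nzv h.symm
  have nau' : ¬ G.Adj u a := fun h => nau h.symm
  have nav' : ¬ G.Adj v a := fun h => nav h.symm
  have nbu' : ¬ G.Adj u b := fun h => nbu h.symm
  have nbv' : ¬ G.Adj v b := fun h => nbv h.symm
  refine ⟨⟨⟨![z,a,b,u,v], ?_⟩, ?_⟩⟩
  · intro i j h
    fin_cases i <;> fin_cases j <;> simp_all
  · intro i j
    change G.Adj (![z,a,b,u,v] i) (![z,a,b,u,v] j) ↔ _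
    fin_cases i <;> fin_cases j <;>
      simp_all [K1plus2K2, SimpleGraph.fromRel_adj]

lemma noC6 {V : Type*} (G : SimpleGraph V)
    (hC6 : ¬ Nonempty (C6 ↪g G))
    (x0 x1 x2 x3 x4 x5 : V)
    (d01 : x0 ≠ x1) (d02 : x0 ≠ x2) (d03 : x0 ≠ x3) (d04 : x0 ≠ x4) (d05 : x0 ≠ x5)
    (d12 : x1 ≠ x2) (d13 : x1 ≠ x3) (d14 : x1 ≠ x4) (d15 : x1 ≠ x5)
    (d23 : x2 ≠ x3) (d24 : x2 ≠ x4) (d25 : x2 ≠ x5)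
    (d34 : x3 ≠ x4) (d35 : x3 ≠ x5) (d45 : x4 ≠ x5)
    (e01 : G.Adj x0 x1) (e12 : G.Adj x1 x2) (e23 : G.Adj x2 x3)
    (e34 : G.Adj x3 x4) (e45 : G.Adj x4 x5) (e50 : G.Adj x5 x0)
    (n02 : ¬ G.Adj x0 x2) (n03 : ¬ G.Adj x0 x3) (n04 : ¬ G.Adj x0 x4)
    (n13 : ¬ G.Adj x1 x3) (n14 : ¬ G.Adj x1 x4) (n15 : ¬ G.Adj x1 x5)
    (n24 : ¬ G.Adj x2 x4) (n25 : ¬ G.Adj x2 x5) (n35 : ¬ G.Adj x3 x5) :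
    False := by
  apply hC6
  have e01' := e01.symm; have e12' := e12.symm; have e23' := e23.symm
  have e34' := e34.symm; have e45' := e45.symm; have e50' := e50.symm
  have n02' : ¬ G.Adj x2 x0 := fun h => n02 h.symm
  have n03' : ¬ G.Adj x3 x0 := fun h => n03 h.symm
  have n04' : ¬ G.Adj x4 x0 := fun h => n04 h.symm
  have n13' : ¬ G.Adj x3 x1 := fun h => n13 h.symm
  have n14' : ¬ G.Adj x4 x1 := fun h => n14 h.symm
  have n15' : ¬ G.Adj x5 x1 := fun h => n15 h.symm
  have n24' : ¬ G.Adj x4 x2 := fun h => n24 h.symm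
  have n25' : ¬ G.Adj x5 x2 := fun h => n25 h.symm
  have n35' : ¬ G.Adj x5 x3 := fun h => n35 h.symm
  refine ⟨⟨⟨fun i : ZMod 6 => if i = 0 then x0 else if i = 1 then x1 else if i = 2 then x2
    else if i = 3 then x3 else if i = 4 then x4 else x5, ?_⟩, ?_⟩⟩
  · intro i j h
    revert h
    fin_cases i <;> fin_cases j
    · exact fun _ => rfl
    · exact fun h => absurd h d01
    · exact fun h => absurd h d02
    · exact fun h => absurd h d03
    · exact fun h => absurd h d04
    · exact fun h => absurd h d05
    · exact fun h => absurd h (Ne.symm d01)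
    · exact fun _ => rfl
    · exact fun h => absurd h d12
    · exact fun h => absurd h d13
    · exact fun h => absurd h d14
    · exact fun h => absurd h d15
    · exact fun h => absurd h (Ne.symm d02)
    · exact fun h => absurd h (Ne.symm d12)
    · exact fun _ => rfl
    · exact fun h => absurd h d23
    · exact fun h => absurd h d24
    · exact fun h => absurd h d25
    · exact fun h => absurd h (Ne.symm d03)
    · exact fun h => absurd h (Ne.symm d13)
    · exact fun h => absurd h (Ne.symm d23)
    · exact fun _ => rfl
    · exact fun h => absurd h d34
    · exact fun h => absurd h d35
    · exact fun h => absurd h (Ne.symm d04)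
    · exact fun h => absurd h (Ne.symm d14)
    · exact fun h => absurd h (Ne.symm d24)
    · exact fun h => absurd h (Ne.symm d34)
    · exact fun _ => rfl
    · exact fun h => absurd h d45
    · exact fun h => absurd h (Ne.symm d05)
    · exact fun h => absurd h (Ne.symm d15)
    · exact fun h => absurd h (Ne.symm d25)
    · exact fun h => absurd h (Ne.symm d35)
    · exact fun h => absurd h (Ne.symm d45)
    · exact fun _ => rfl
  · intro i j
    change G.Adj ((fun i : ZMod 6 => if i = 0 then x0 else if i = 1 then x1 else if i = 2 then x2
      else if i = 3 then x3 else if i = 4 then x4 else x5) i) ((fun i : ZMod 6 => if i = 0 then x0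
      else if i = 1 then x1 else if i = 2 then x2 else if i = 3 then x3 else if i = 4 then x4
      else x5) j) ↔ C6.Adj i j
    fin_cases i <;> fin_cases j
    · exact iff_of_false (G.irrefl) (by decide)
    · exact iff_of_true e01 (by decide)
    · exact iff_of_false n02 (by decide)
    · exact iff_of_false n03 (by decide)
    · exact iff_of_false n04 (by decide)
    · exact iff_of_true e50' (by decide)
    · exact iff_of_true e01' (by decide)
    · exact iff_of_false (G.irrefl) (by decide)
    · exact iff_of_true e12 (by decide)
    · exact iff_of_false n13 (by decide)
    · exact iff_of_false n14 (by decide)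
    · exact iff_of_false n15 (by decide)
    · exact iff_of_false n02' (by decide)
    · exact iff_of_true e12' (by decide)
    · exact iff_of_false (G.irrefl) (by decide)
    · exact iff_of_true e23 (by decide)
    · exact iff_of_false n24 (by decide)
    · exact iff_of_false n25 (by decide)
    · exact iff_of_false n03' (by decide)
    · exact iff_of_false n13' (by decide)
    · exact iff_of_true e23' (by decide)
    · exact iff_of_false (G.irrefl) (by decide)
    · exact iff_of_true e34 (by decide)
    · exact iff_of_false n35 (by decide)
    · exact iff_of_false n04' (by decide)
    · exact iff_of_false n14' (by decide)
    · exact iff_of_false n24' (by decide)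
    · exact iff_of_true e34' (by decide)
    · exact iff_of_false (G.irrefl) (by decide)
    · exact iff_of_true e45 (by decide)
    · exact iff_of_true e50 (by decide)
    · exact iff_of_false n15' (by decide)
    · exact iff_of_false n25' (by decide)
    · exact iff_of_false n35' (by decide)
    · exact iff_of_true e45' (by decide)
    · exact iff_of_false (G.irrefl) (by decide)

lemma dominating {V : Type*} (G : SimpleGraph V) (I : Set V)
    (hind : IsIndep G I)
    (hmax : ∀ J : Set V, IsIndep G J → I ⊆ J → J = I) :
    ∀ x : V, x ∉ I → ∃ y ∈ I, G.Adj y x := by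
  intro x hx
  by_contra h
  push_neg at h
  have hJ : IsIndep G (insert x I) := by
    intro p hp q hq hpq
    rcases Set.mem_insert_iff.mp hp with hp | hp <;>
      rcases Set.mem_insert_iff.mp hq with hq | hq
    · exact G.irrefl (hp ▸ hq ▸ hpq)
    · exact h q hq (hp ▸ hpq).symm
    · exact h p hp (hq ▸ hpq)
    · exact hind p hp q hq hpq
  have := hmax _ hJ (Set.subset_insert x I)
  exact hx (this ▸ Set.mem_insert x I)

lemma tri_free {V : Type*} (G : SimpleGraph V) (hK3 : G.CliqueFree 3) :
    ∀ x y z : V, G.Adj x y → G.Adj x z → G.Adj y z → False := by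
  intro x y z h1 h2 h3
  classical
  exact hK3 {x, y, z} (SimpleGraph.is3Clique_triple_iff.mpr ⟨h1, h2, h3⟩)

lemma core_case {V : Type*} (G : SimpleGraph V) (I : Set V)
    (hK3 : G.CliqueFree 3)
    (hK1plus2K2 : ¬ Nonempty (K1plus2K2 ↪g G))
    (hC6 : ¬ Nonempty (C6 ↪g G))
    (hind : IsIndep G I)
    (hdom : ∀ x : V, x ∉ I → ∃ y ∈ I, G.Adj y x)
    (a b u v w : V)
    (ha : a ∉ I) (hb : b ∉ I) (hu : u ∉ I) (hv : v ∉ I)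
    (hab' : a ≠ b) (hau : a ≠ u) (hav : a ≠ v) (hbu : b ≠ u) (hbv : b ≠ v) (huv' : u ≠ v)
    (hab : G.Adj a b) (huv : G.Adj u v)
    (nau : ¬ G.Adj a u) (nav : ¬ G.Adj a v) (nbu : ¬ G.Adj b u) (nbv : ¬ G.Adj b v)
    (hw : w ∈ I) (hwa : G.Adj w a) (hwu : G.Adj w u) :
    False := by
  have tri := tri_free G hK3
  have neI : ∀ x y : V, x ∈ I → y ∉ I → x ≠ y := fun x y hx hy h => hy (h ▸ hx)
  have hwa' : w ≠ a := neI w a hw ha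
  have hwb : w ≠ b := neI w b hw hb
  have hwu' : w ≠ u := neI w u hw hu
  have hwv : w ≠ v := neI w v hw hv
  have nwb : ¬ G.Adj w b := fun h => tri w a b hwa h hab
  have nwv : ¬ G.Adj w v := fun h => tri w u v hwu h huv
  obtain ⟨B, hB, hBb⟩ := hdom b hb
  have nBa : ¬ G.Adj B a := fun h => tri B a b h hBb hab
  have hBw : B ≠ w := fun h => nwb (h ▸ hBb)
  by_cases hBv : G.Adj B v
  · -- C6 : a b B v u w
    have nBu : ¬ G.Adj B u := fun h => tri B u v h hBv huv
    exact noC6 G hC6 a b B v u w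
      hab' (Ne.symm (neI B a hB ha)) hav hau hwa'.symm
      (Ne.symm (neI B b hB hb)) hbv hbu hwb.symm
      (neI B v hB hv) (neI B u hB hu) hBw
      huv'.symm hwv.symm hwu'.symm
      hab hBb.symm hBv huv.symm hwu.symm hwa
      (fun h => nBa h.symm) nav nau nbv nbu
      (fun h => nwb h.symm) nBu (hind B hB w hw)
      (fun h => nwv h.symm)
  · by_cases hBu : G.Adj B u
    · obtain ⟨c, hc, hcv⟩ := hdom v hv
      have ncu : ¬ G.Adj c u := fun h => tri c u v h hcv huv
      have hcw : c ≠ w := fun h => nwv (h ▸ hcv)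
      have hcB : c ≠ B := fun h => hBv (h ▸ hcv)
      by_cases hca : G.Adj c a
      · -- C6 : u v c a b B
        have ncb : ¬ G.Adj c b := fun h => tri c a b hca h hab
        exact noC6 G hC6 u v c a b B
          huv' (Ne.symm (neI c u hc hu)) hau.symm hbu.symm (Ne.symm (neI B u hB hu))
          (Ne.symm (neI c v hc hv)) hav.symm hbv.symm (Ne.symm (neI B v hB hv))
          (neI c a hc ha) (neI c b hc hb) hcB
          hab' (Ne.symm (neI B a hB ha))
          (Ne.symm (neI B b hB hb))
          huv hcv.symm hca hab hBb.symm hBu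
          (fun h => ncu h.symm) (fun h => nau h.symm) (fun h => nbu h.symm)
          (fun h => nav h.symm) (fun h => nbv h.symm) (fun h => hBv h.symm)
          ncb (hind c hc B hB) (fun h => nBa h.symm)
      · by_cases hcb : G.Adj c b
        · -- C6 : u v c b a w
          have nca : ¬ G.Adj c a := hca
          exact noC6 G hC6 u v c b a w
            huv' (Ne.symm (neI c u hc hu)) hbu.symm hau.symm hwu'.symm
            (Ne.symm (neI c v hc hv)) hbv.symm hav.symm hwv.symm
            (neI c b hc hb) (neI c a hc ha) hcw
            hab'.symm hwb.symm hwa'.symm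
            huv hcv.symm hcb hab.symm hwa.symm hwu
            (fun h => ncu h.symm) (fun h => nbu h.symm) (fun h => nau h.symm)
            (fun h => nbv h.symm) (fun h => nav h.symm) (fun h => nwv h.symm)
            nca (hind c hc w hw) (fun h => nwb h.symm)
        · -- K1+2K2 : B isolated; edges v-c and a-w
          exact noK1p G hK1plus2K2 B v c a w
            (neI B v hB hv) (Ne.symm hcB) (neI B a hB ha) hBw
            (neI c v hc hv).symm hav.symm hwv.symm
            (neI c a hc ha) hcw
            (neI w a hw ha).symm
            hcv.symm hwa.symm
            hBv (hind B hB c hc) nBa (hind B hB w hw)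
            (fun h => nav h.symm) (fun h => nwv h.symm)
            hca (hind c hc w hw)
    · -- B adjacent to neither u nor v
      obtain ⟨c, hc, hcv⟩ := hdom v hv
      have ncu : ¬ G.Adj c u := fun h => tri c u v h hcv huv
      have hcw : c ≠ w := fun h => nwv (h ▸ hcv)
      have hcB : c ≠ B := fun h => hBv (h ▸ hcv)
      by_cases hcb : G.Adj c b
      · -- C6 : a w u v c b
        have nca : ¬ G.Adj c a := fun h => tri c a b h hcb hab
        exact noC6 G hC6 a w u v c b
          hwa'.symm hau hav (neI c a hc ha).symm hab'
          hwu' hwv hcw.symm hwb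
          huv' (neI c u hc hu).symm hbu.symm
          (neI c v hc hv).symm hbv.symm
          (neI c b hc hb)
          hwa.symm hwu huv hcv.symm hcb hab.symm
          nau nav (fun h => nca h.symm)
          nwv (hind w hw c hc) nwb
          (fun h => ncu h.symm) (fun h => nbu h.symm) (fun h => nbv h.symm)
      · -- K1+2K2 : w isolated; edges b-B and v-c
        have hBc : B ≠ c := fun h => hBv (h.symm ▸ hcv)
        exact noK1p G hK1plus2K2 w b B v c
          hwb (Ne.symm hBw) hwv (Ne.symm hcw)
          (neI B b hB hb).symm hbv (neI c b hc hb).symm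
          (neI B v hB hv) hBc
          (neI c v hc hv).symm
          hBb.symm hcv.symm
          nwb (hind w hw B hB) nwv (hind w hw c hc)
          nbv (fun h => hcb h.symm) hBv (hind B hB c hc)

/-- Every induced copy of `2K₂` in `G` (four vertices `a,b,u,v` with exactly the two
edges `ab` and `uv`) contains at least one vertex of the maximal independent set `I`. -/
theorem induced_2K2_meets_maxIndep {V : Type*} [Fintype V] (G : SimpleGraph V) (I : Set V)
    (hK3 : G.CliqueFree 3)
    (hK1plus2K2 : ¬ Nonempty (K1plus2K2 ↪g G))
    (hC6 : ¬ Nonempty (C6 ↪g G))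
    (hind : IsIndep G I)
    (hmax : ∀ J : Set V, IsIndep G J → I ⊆ J → J = I) :
    ∀ a b u v : V, a ≠ b → a ≠ u → a ≠ v → b ≠ u → b ≠ v → u ≠ v →
      G.Adj a b → G.Adj u v →
      ¬ G.Adj a u → ¬ G.Adj a v → ¬ G.Adj b u → ¬ G.Adj b v →
      (a ∈ I ∨ b ∈ I ∨ u ∈ I ∨ v ∈ I) := by
  intro a b u v hab' hau hav hbu hbv huv' hab huv nau nav nbu nbv
  by_contra hcon
  push_neg at hcon
  obtain ⟨ha, hb, hu, hv⟩ := hcon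
  have tri := tri_free G hK3
  have hdom := dominating G I hind hmax
  have neI : ∀ x y : V, x ∈ I → y ∉ I → x ≠ y := fun x y hx hy h => hy (h ▸ hx)
  obtain ⟨A, hA, hAa⟩ := hdom a ha
  by_cases hAu : G.Adj A u
  · exact core_case G I hK3 hK1plus2K2 hC6 hind hdom a b u v A
      ha hb hu hv hab' hau hav hbu hbv huv' hab huv nau nav nbu nbv hA hAa hAu
  · by_cases hAv : G.Adj A v
    · exact core_case G I hK3 hK1plus2K2 hC6 hind hdom a b v u A
        ha hb hv hu hab' hav hau hbv hbu (Ne.symm huv') hab huv.symm nav nau nbv nbu hA hAa hAv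
    · obtain ⟨B, hB, hBb⟩ := hdom b hb
      by_cases hBu : G.Adj B u
      · exact core_case G I hK3 hK1plus2K2 hC6 hind hdom b a u v B
          hb ha hu hv (Ne.symm hab') hbu hbv hau hav huv' hab.symm huv nbu nbv nau nav hB hBb hBu
      · by_cases hBv : G.Adj B v
        · exact core_case G I hK3 hK1plus2K2 hC6 hind hdom b a v u B
            hb ha hv hu (Ne.symm hab') hbv hbu hav hau (Ne.symm huv') hab.symm huv.symm
            nbv nbu nav nau hB hBb hBv
        · -- K1+2K2 : B isolated; edges a-A and u-v
          have nBa : ¬ G.Adj B a := fun h => tri B a b h hBb hab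
          have hBA : B ≠ A := fun h => nBa (h ▸ hAa)
          exact noK1p G hK1plus2K2 B a A u v
            (neI B a hB ha) hBA (neI B u hB hu) (neI B v hB hv)
            (neI A a hA ha).symm hau hav
            (neI A u hA hu) (neI A v hA hv) huv'
            hAa.symm huv
            nBa (hind B hB A hA) hBu hBv
            nau nav hAu hAv
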